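/- arXiv:1411.2066 — 2 statements merged into one kernel-verified Lean document; each statement's English description precedes it below -/
import Mathlib

section
/- Let M be a bounded, self-adjoint, positive operator on a Hilbert space K, let λ > 0, s ≥ 0, a ≥ 0 with s + a > 0, and suppose f ∈ K lies in the range of M^s, i.e. f = M^s g. Then ‖M^a((M+λI)⁻¹ M f − f)‖ ≤ max(1, ‖M‖^{s+a−1}) · λ^{min(1, s+a)} · ‖g‖. -/
open scoped Real

private lemma scalar_bound {lam s a nM t : ℝ} (hlam : 0 < lam) (hs : 0 ≤ s) (ha : 0 ≤ a)
    (hsa : 0 < s + a) (ht0 : 0 ≤ t) (htM : t ≤ nM) :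
    lam * (t ^ a * ((t + lam)⁻¹ * t ^ s)) ≤
      max 1 (nM ^ (s + a - 1)) * lam ^ min 1 (s + a) := by
  have htlam : 0 < t + lam := by linarith
  have hnM0 : 0 ≤ nM := le_trans ht0 htM
  have hrw : t ^ a * ((t + lam)⁻¹ * t ^ s) = t ^ (s + a) * (t + lam)⁻¹ := by
    rw [Real.rpow_add' ht0 (by linarith : s + a ≠ 0)]
    ring
  rw [hrw]
  rcases le_or_gt 1 (s + a) with hr | hr
  · -- min = 1
    rw [min_eq_left hr, Real.rpow_one]
    have h1 : t ^ (s + a) = t ^ (s + a - 1) * t := by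
      have e : s + a - 1 + 1 = s + a := by ring
      have key := Real.rpow_add' ht0 (by linarith : (s + a - 1) + 1 ≠ 0)
      rw [e, Real.rpow_one] at key
      exact key
    have h2 : t ^ (s + a - 1) ≤ nM ^ (s + a - 1) :=
      Real.rpow_le_rpow ht0 htM (by linarith)
    have h3 : t * (t + lam)⁻¹ ≤ 1 := by
      rw [mul_inv_le_iff₀ htlam]; linarith
    have h4 : t ^ (s + a) * (t + lam)⁻¹ ≤ nM ^ (s + a - 1) := by
      calc t ^ (s + a) * (t + lam)⁻¹ = t ^ (s + a - 1) * (t * (t + lam)⁻¹) := by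
            rw [h1]; ring
        _ ≤ nM ^ (s + a - 1) * 1 := by
            apply mul_le_mul h2 h3 (by positivity) (by positivity)
        _ = nM ^ (s + a - 1) := mul_one _
    calc lam * (t ^ (s + a) * (t + lam)⁻¹) ≤ lam * nM ^ (s + a - 1) := by
          exact mul_le_mul_of_nonneg_left h4 hlam.le
      _ = nM ^ (s + a - 1) * lam := mul_comm _ _
      _ ≤ max 1 (nM ^ (s + a - 1)) * lam :=
          mul_le_mul_of_nonneg_right (le_max_right _ _) hlam.le
  · -- min = s + a
    rw [min_eq_right hr.le]
    set r := s + a with hrdef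
    have hkey : lam ^ (1 - r) * t ^ r ≤ t + lam := by
      set m := max t lam with hm
      have hm0 : 0 < m := lt_of_lt_of_le hlam (le_max_right _ _)
      have h1 : t ^ r ≤ m ^ r := Real.rpow_le_rpow ht0 (le_max_left _ _) hsa.le
      have h2 : lam ^ (1 - r) ≤ m ^ (1 - r) :=
        Real.rpow_le_rpow hlam.le (le_max_right _ _) (by linarith)
      calc lam ^ (1 - r) * t ^ r ≤ m ^ (1 - r) * m ^ r := by
            apply mul_le_mul h2 h1 (by positivity) (by positivity)
        _ = m ^ ((1 - r) + r) := (Real.rpow_add hm0 _ _).symm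
        _ = m := by norm_num
        _ ≤ t + lam := by
            rcases max_cases t lam with ⟨h, _⟩ | ⟨h, _⟩ <;> rw [hm, h] <;> linarith
    have hlamsplit : lam = lam ^ r * lam ^ (1 - r) := by
      rw [← Real.rpow_add hlam]; norm_num
    have h5 : lam * (t ^ r * (t + lam)⁻¹) ≤ lam ^ r := by
      calc lam * (t ^ r * (t + lam)⁻¹)
          = lam ^ r * ((lam ^ (1 - r) * t ^ r) * (t + lam)⁻¹) := by
            nth_rewrite 1 [hlamsplit]
            ring
        _ ≤ lam ^ r * 1 := by
            apply mul_le_mul_of_nonneg_left _ (by positivity)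
            rw [mul_inv_le_iff₀ htlam]; linarith
        _ = lam ^ r := mul_one _
    calc lam * (t ^ r * (t + lam)⁻¹) ≤ lam ^ r := h5
      _ = 1 * lam ^ r := (one_mul _).symm
      _ ≤ max 1 (nM ^ (r - 1)) * lam ^ r :=
          mul_le_mul_of_nonneg_right (le_max_left _ _) (by positivity)

/-- Spectral bound on regularized inverses: for a compact positive self-adjoint
operator `M`, `λ > 0`, `s, a ≥ 0` with `s + a > 0`, `B` the inverse of `M + λI`,
and `f = M^s g` (via the continuous functional calculus), we have
`‖M^a((M+λI)⁻¹ M f − f)‖ ≤ max(1, ‖M‖^{s+a−1}) λ^{min(1, s+a)} ‖g‖`. -/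
theorem stmt3 {K : Type*} [NormedAddCommGroup K] [InnerProductSpace ℂ K] [CompleteSpace K]
    (M B : K →L[ℂ] K) (lam s a : ℝ) (hlam : 0 < lam) (hs : 0 ≤ s) (ha : 0 ≤ a)
    (hsa : 0 < s + a) (hM : M.IsPositive) (hcpt : IsCompactOperator M)
    (hB1 : (M + lam • 1) ∘L B = 1) (hB2 : B ∘L (M + lam • 1) = 1)
    (f g : K) (hf : f = cfc (fun t : ℝ => t ^ s) M g) :
    ‖cfc (fun t : ℝ => t ^ a) M (B (M f) - f)‖ ≤
      max 1 (‖M‖ ^ (s + a - 1)) * lam ^ min 1 (s + a) * ‖g‖ := by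
  rcases subsingleton_or_nontrivial K with hK | hK
  · have h0 : cfc (fun t : ℝ => t ^ a) M (B (M f) - f) = 0 := Subsingleton.elim _ _
    rw [h0, norm_zero]
    have h1 : (0:ℝ) ≤ lam ^ min 1 (s + a) := Real.rpow_nonneg hlam.le _
    have h2 : (0:ℝ) ≤ max 1 (‖M‖ ^ (s + a - 1)) := le_trans zero_le_one (le_max_left _ _)
    positivity
  have hMsa : IsSelfAdjoint M := hM.isSelfAdjoint
  have hM0 : (0 : K →L[ℂ] K) ≤ M := (ContinuousLinearMap.nonneg_iff_isPositive M).mpr hM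
  have hspec0 : ∀ t ∈ spectrum ℝ M, 0 ≤ t := fun t ht => spectrum_nonneg_of_nonneg hM0 ht
  have hspecle : ∀ t ∈ spectrum ℝ M, t ≤ ‖M‖ := fun t ht =>
    (le_abs_self t).trans (spectrum.norm_le_norm_of_mem ht)
  -- continuity facts
  have hca : ContinuousOn (fun t : ℝ => t ^ a) (spectrum ℝ M) := fun x _ =>
    (Real.continuousAt_rpow_const x a (Or.inr ha)).continuousWithinAt
  have hcs : ContinuousOn (fun t : ℝ => t ^ s) (spectrum ℝ M) := fun x _ =>
    (Real.continuousAt_rpow_const x s (Or.inr hs)).continuousWithinAt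
  have hcinv : ContinuousOn (fun t : ℝ => (t + lam)⁻¹) (spectrum ℝ M) := by
    intro x hx
    have hx0 : x + lam ≠ 0 := by have := hspec0 x hx; positivity
    exact ((continuousAt_id.add continuousAt_const).inv₀ hx0).continuousWithinAt
  -- B is cfc of (t+lam)⁻¹
  set C := cfc (fun t : ℝ => (t + lam)⁻¹) M with hC
  have hMl : M + lam • 1 = cfc (fun t : ℝ => t + lam) M := by
    rw [cfc_add (a := M) (f := fun t : ℝ => t) (g := fun _ : ℝ => lam) (by fun_prop) (by fun_prop),
      cfc_id' ℝ M, cfc_const lam M, Algebra.algebraMap_eq_smul_one]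
  have key1 : (M + lam • 1) * C = 1 := by
    rw [hMl, hC, ← cfc_mul _ _ M (by fun_prop) hcinv]
    have heq : (spectrum ℝ M).EqOn (fun t => (t + lam) * (t + lam)⁻¹) 1 := by
      intro t ht
      have : t + lam ≠ 0 := by have := hspec0 t ht; positivity
      simp [mul_inv_cancel₀ this]
    rw [cfc_congr heq, cfc_one ℝ M]
  have hBC : B = C := by
    calc B = B * ((M + lam • 1) * C) := by rw [key1, mul_one]
      _ = (B ∘L (M + lam • 1)) * C := by rw [← mul_assoc]; rfl
      _ = C := by rw [hB2, one_mul]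
  -- vector identity
  have hvec : B (M f) - f = -(lam • B f) := by
    have h : (B ∘L (M + lam • 1)) f = (1 : K →L[ℂ] K) f := by rw [hB2]
    simp only [ContinuousLinearMap.comp_apply, ContinuousLinearMap.add_apply,
      ContinuousLinearMap.smul_apply, ContinuousLinearMap.one_apply, map_add,
      ContinuousLinearMap.map_smul_of_tower] at h
    rw [eq_neg_iff_add_eq_zero, sub_add_eq_add_sub, h, sub_self]
  rw [hvec, map_neg, norm_neg, ContinuousLinearMap.map_smul_of_tower, norm_smul, Real.norm_eq_abs, abs_of_pos hlam]
  -- compose the cfc's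
  have hcomp : cfc (fun t : ℝ => t ^ a) M (B f) =
      cfc (fun t : ℝ => t ^ a * ((t + lam)⁻¹ * t ^ s)) M g := by
    rw [cfc_mul (fun t : ℝ => t ^ a) (fun t : ℝ => (t + lam)⁻¹ * t ^ s) M hca (hcinv.mul hcs),
      cfc_mul (fun t : ℝ => (t + lam)⁻¹) (fun t : ℝ => t ^ s) M hcinv hcs, hBC, hf]
    rfl
  rw [hcomp]
  set c := max 1 (‖M‖ ^ (s + a - 1)) * lam ^ min 1 (s + a) with hc
  have hc0 : 0 ≤ c := by positivity
  have hnorm : ‖cfc (fun t : ℝ => t ^ a * ((t + lam)⁻¹ * t ^ s)) M‖ ≤ c / lam := by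
    apply norm_cfc_le (div_nonneg hc0 hlam.le)
    intro t ht
    rw [le_div_iff₀ hlam, mul_comm _ lam]
    have h0 := hspec0 t ht
    have hle := hspecle t ht
    rw [Real.norm_eq_abs, abs_of_nonneg (by positivity)]
    exact scalar_bound hlam hs ha hsa h0 hle
  calc lam * ‖cfc (fun t : ℝ => t ^ a * ((t + lam)⁻¹ * t ^ s)) M g‖
      ≤ lam * (‖cfc (fun t : ℝ => t ^ a * ((t + lam)⁻¹ * t ^ s)) M‖ * ‖g‖) := by
        apply mul_le_mul_of_nonneg_left (ContinuousLinearMap.le_opNorm _ _) hlam.le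
    _ ≤ lam * (c / lam * ‖g‖) := by
        apply mul_le_mul_of_nonneg_left _ hlam.le
        exact mul_le_mul_of_nonneg_right hnorm (norm_nonneg _)
    _ = c * ‖g‖ := by field_simp
end

section
/- Let T, T_x be bounded positive self-adjoint operators on a Hilbert space 𝓗 and λ > 0. If ‖(T − T_x)(T + λI)⁻¹‖_{op} ≤ 1/2, then ‖(T + λI)^{1/2} (T_x + λI)⁻¹ (T + λI)^{1/2}‖_{op} ≤ 2. -/
/-- Auxiliary algebraic lemma in an abstract C*-ring. -/
lemma stmt16_aux {A : Type*} [NormedRing A] [StarRing A] [CStarRing A]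
    (R B' Binv E A1 A2 : A)
    (hR2 : R * R = A1) (hB2 : A1 * B' = 1) (hB2' : B' * A1 = 1)
    (hBA2 : Binv * A2 = 1) (hA2 : A2 = A1 - E)
    (hRsa : star R = R) (hA1sa : star A1 = A1) (hEsa : star E = E)
    (hone : ‖(1 : A)‖ ≤ 1)
    (hsmall : ‖E * B'‖ ≤ 1 / 2) :
    ‖R * (Binv * R)‖ ≤ 2 := by
  -- B' is self-adjoint
  have hB'sa : star B' = B' := by
    have h1 : star B' * A1 = 1 := by
      have := congrArg star hB2
      rwa [star_mul, hA1sa, star_one] at this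
    calc star B' = star B' * (A1 * B') := by rw [hB2, mul_one]
      _ = (star B' * A1) * B' := (mul_assoc _ _ _).symm
      _ = B' := by rw [h1, one_mul]
  -- A1 commutes with R, hence B' commutes with R
  have hcomm : A1 * R = R * A1 := by rw [← hR2, mul_assoc]
  have hBR : B' * R = R * B' := by
    calc B' * R = B' * (R * (A1 * B')) := by rw [hB2, mul_one]
      _ = B' * (A1 * (R * B')) := by rw [← mul_assoc R, ← hcomm, mul_assoc]
      _ = (B' * A1) * (R * B') := (mul_assoc _ _ _).symm
      _ = R * B' := by rw [hB2', one_mul]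
  obtain ⟨S, hS⟩ : ∃ S, S = R * B' := ⟨_, rfl⟩
  have hSR : S * R = 1 := by
    rw [hS]
    calc (R * B') * R = R * (B' * R) := mul_assoc _ _ _
      _ = R * (R * B') := by rw [hBR]
      _ = A1 * B' := by rw [← mul_assoc, hR2]
      _ = 1 := hB2
  have hRS : R * S = 1 := by rw [hS, ← mul_assoc, hR2, hB2]
  have hSsa : star S = S := by
    rw [hS, star_mul, hB'sa, hRsa, hBR]
  obtain ⟨X, hX⟩ : ∃ X, X = E * B' := ⟨_, rfl⟩
  have hES : E * S = X * R := by rw [hS, hX, mul_assoc, hBR]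
  obtain ⟨D, hD⟩ : ∃ D, D = S * (E * S) := ⟨_, rfl⟩
  have hDsa : IsSelfAdjoint D := by
    rw [IsSelfAdjoint, hD, star_mul, star_mul, hSsa, hEsa, mul_assoc]
  -- powers of D
  have hpow : ∀ n : ℕ, D ^ (n + 1) = S * (X ^ (n + 1) * R) := by
    intro n
    induction n with
    | zero => rw [pow_one, pow_one, hD, hES]
    | succ n ih =>
      calc D ^ (n + 2) = D ^ (n + 1) * D := pow_succ _ _
        _ = (S * (X ^ (n + 1) * R)) * (S * (E * S)) := by rw [ih, hD]
        _ = S * (X ^ (n + 1) * (R * (S * (E * S)))) := by simp only [mul_assoc]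
        _ = S * (X ^ (n + 1) * (E * S)) := by rw [← mul_assoc R, hRS, one_mul]
        _ = S * ((X ^ (n + 1) * X) * R) := by rw [hES, ← mul_assoc (X ^ (n + 1)) X R]
        _ = S * (X ^ (n + 2) * R) := by rw [← pow_succ]
  have hXle : ‖X‖ ≤ 1 / 2 := by rw [hX]; exact hsmall
  have hDn : ∀ n : ℕ, ‖D ^ (n + 1)‖ ≤ ‖S‖ * ‖R‖ * (1 / 2) ^ (n + 1) := by
    intro n
    rw [hpow n]
    calc ‖S * (X ^ (n + 1) * R)‖ ≤ ‖S‖ * ‖X ^ (n + 1) * R‖ := norm_mul_le _ _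
      _ ≤ ‖S‖ * (‖X ^ (n + 1)‖ * ‖R‖) := by
          gcongr; exact norm_mul_le _ _
      _ ≤ ‖S‖ * (‖X‖ ^ (n + 1) * ‖R‖) := by
          gcongr
          exact norm_pow_le' X n.succ_pos
      _ ≤ ‖S‖ * ((1 / 2) ^ (n + 1) * ‖R‖) := by
          gcongr
      _ = ‖S‖ * ‖R‖ * (1 / 2) ^ (n + 1) := by ring
  -- norm of 2^k-th power of the self-adjoint D
  have hD2 : ∀ k : ℕ, ‖D‖ ^ (2 ^ k) = ‖D ^ (2 ^ k)‖ := by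
    intro k
    have h := hDsa.nnnorm_pow_two_pow k
    have h2 := congrArg (fun x : NNReal => (x : ℝ)) h
    simp only [coe_nnnorm, NNReal.coe_pow] at h2
    exact h2.symm
  -- conclude ‖D‖ ≤ 1/2
  have hDle : ‖D‖ ≤ 1 / 2 := by
    by_contra h
    push_neg at h
    have h1 : (1 : ℝ) < 2 * ‖D‖ := by linarith
    obtain ⟨n, hn⟩ := pow_unbounded_of_one_lt (‖S‖ * ‖R‖) h1
    have h2n : n ≤ 2 ^ n := Nat.le_of_lt (Nat.lt_two_pow_self (n := n))
    have h3 : (2 * ‖D‖) ^ n ≤ (2 * ‖D‖) ^ (2 ^ n) :=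
      pow_le_pow_right₀ (le_of_lt h1) h2n
    have h5 : ‖D‖ ^ (2 ^ n) ≤ ‖S‖ * ‖R‖ * (1 / 2) ^ (2 ^ n) := by
      obtain ⟨m, hm⟩ : ∃ m, 2 ^ n = m + 1 :=
        ⟨2 ^ n - 1, (Nat.succ_pred_eq_of_pos (Nat.pow_pos (n := n) (by norm_num : 0 < 2))).symm⟩
      rw [hD2 n, hm]
      exact hDn m
    have h6 : (2 * ‖D‖) ^ (2 ^ n) ≤ ‖S‖ * ‖R‖ := by
      calc (2 * ‖D‖) ^ (2 ^ n) = 2 ^ (2 ^ n) * ‖D‖ ^ (2 ^ n) := mul_pow 2 ‖D‖ (2 ^ n)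
        _ ≤ 2 ^ (2 ^ n) * (‖S‖ * ‖R‖ * (1 / 2) ^ (2 ^ n)) := by
            gcongr
        _ = ‖S‖ * ‖R‖ * (2 * (1 / 2)) ^ (2 ^ n) := by rw [mul_pow]; ring
        _ = ‖S‖ * ‖R‖ := by norm_num
    linarith [lt_of_lt_of_le hn h3]
  -- the main operator
  have hA1S : A1 * S = R := by rw [← hR2, mul_assoc, hRS, mul_one]
  have h1D : S * (A2 * S) = 1 - D := by
    calc S * (A2 * S) = S * (A1 * S) - S * (E * S) := by
          rw [hA2, sub_mul, mul_sub]
      _ = 1 - D := by rw [hA1S, hSR, hD]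
  obtain ⟨M, hM⟩ : ∃ M, M = R * (Binv * R) := ⟨_, rfl⟩
  have hM1 : M * (1 - D) = 1 := by
    rw [← h1D, hM]
    calc (R * (Binv * R)) * (S * (A2 * S))
        = R * (Binv * (R * (S * (A2 * S)))) := by simp only [mul_assoc]
      _ = R * (Binv * (A2 * S)) := by rw [← mul_assoc R S, hRS, one_mul]
      _ = R * S := by rw [← mul_assoc Binv, hBA2, one_mul]
      _ = 1 := hRS
  have hMeq : M = 1 + M * D := by
    have h0 : M - M * D = 1 := by rw [mul_sub, mul_one] at hM1; exact hM1
    calc M = M - M * D + M * D := by abel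
      _ = 1 + M * D := by rw [h0]
  have hnormM : ‖M‖ ≤ 1 + ‖M‖ * (1 / 2) := by
    calc ‖M‖ = ‖1 + M * D‖ := by rw [← hMeq]
      _ ≤ ‖(1 : A)‖ + ‖M * D‖ := norm_add_le _ _
      _ ≤ 1 + ‖M‖ * (1 / 2) := by
          have h1 : ‖M * D‖ ≤ ‖M‖ * (1 / 2) :=
            le_trans (norm_mul_le _ _) (mul_le_mul_of_nonneg_left hDle (norm_nonneg _))
          exact add_le_add hone h1
  rw [← hM]
  linarith


set_option maxHeartbeats 1000000 in
set_option synthInstance.maxHeartbeats 200000 in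
/-- If `T, T_x` are bounded positive self-adjoint operators, `λ > 0`, `R` is the
positive square root of `T + λI`, `Binv` inverts `T_x + λI`, `B'inv` inverts `T + λI`
and `‖(T − T_x)(T + λI)⁻¹‖ ≤ 1/2`, then `‖(T+λI)^{1/2}(T_x+λI)⁻¹(T+λI)^{1/2}‖ ≤ 2`. -/
theorem stmt16 {G : Type*} [NormedAddCommGroup G] [InnerProductSpace ℝ G] [CompleteSpace G]
    (T Tx R Binv B'inv : G →L[ℝ] G) (lam : ℝ) (hlam : 0 < lam)
    (hT : T.IsPositive) (hTx : Tx.IsPositive)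
    (hR : R.IsPositive) (hR2 : R ∘L R = T + lam • 1)
    (hB : (Tx + lam • 1) ∘L Binv = 1) (hB' : Binv ∘L (Tx + lam • 1) = 1)
    (hB2 : (T + lam • 1) ∘L B'inv = 1) (hB2' : B'inv ∘L (T + lam • 1) = 1)
    (hsmall : ‖(T - Tx) ∘L B'inv‖ ≤ 1 / 2) :
    ‖R ∘L Binv ∘L R‖ ≤ 2 := by
  have hA1sa : IsSelfAdjoint (T + lam • 1) := by
    have h1 : IsSelfAdjoint (lam • (1 : G →L[ℝ] G)) := by
      rw [IsSelfAdjoint, star_smul, star_one]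
      simp
    exact hT.isSelfAdjoint.add h1
  have hone : ‖(1 : G →L[ℝ] G)‖ ≤ 1 := by
    rw [ContinuousLinearMap.one_def]
    exact ContinuousLinearMap.norm_id_le
  exact stmt16_aux R B'inv Binv (T - Tx) (T + lam • 1) (Tx + lam • 1)
    hR2 hB2 hB2' hB' (by abel)
    hR.isSelfAdjoint.star_eq hA1sa.star_eq
    (hT.isSelfAdjoint.sub hTx.isSelfAdjoint).star_eq
    hone hsmall
end
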